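/- The minimal Colless index satisfies c(1) = c(2) = 0, and for all natural numbers n ≥ 1 the recursions c(2n) = 2·c(n) and c(2n+1) = c(n+1) + c(n) + 1 hold. -/
import Mathlib


/-- Full binary trees: either a single leaf, or a node with two full binary subtrees. -/
inductive FBT : Type
  | leaf : FBT
  | node : FBT → FBT → FBT

namespace FBT

/-- Number of leaves of a full binary tree. -/
def leaves : FBT → ℕ
  | leaf => 1
  | node a b => leaves a + leaves b

/-- The Colless index: the sum over internal nodes of the absolute difference of the
numbers of leaves of the two maximal pending subtrees. -/
def colless : FBT → ℕ
  | leaf => 0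
  | node a b => colless a + colless b + Nat.dist (leaves a) (leaves b)

end FBT

/-- The minimal Colless index over all full binary trees with `n` leaves. -/
noncomputable def minColless (n : ℕ) : ℕ :=
  sInf {m : ℕ | ∃ T : FBT, T.leaves = n ∧ T.colless = m}

/-- Explicit candidate for the minimal Colless index. -/
def fMC (n : ℕ) : ℕ :=
  if h : n ≤ 1 then 0
  else if n % 2 = 0 then 2 * fMC (n / 2)
  else fMC (n / 2) + fMC (n / 2 + 1) + 1
termination_by n
decreasing_by all_goals omega

lemma fMC_zero : fMC 0 = 0 := by rw [fMC]; simp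

lemma fMC_one : fMC 1 = 0 := by rw [fMC]; simp

lemma fMC_even (a : ℕ) : fMC (2 * a) = 2 * fMC a := by
  rcases Nat.eq_zero_or_pos a with h | h
  · subst h; simp [fMC_zero]
  · rw [fMC]
    have h1 : ¬ (2 * a ≤ 1) := by omega
    have h2 : 2 * a % 2 = 0 := by omega
    have h3 : 2 * a / 2 = a := by omega
    simp [h1, h2, h3]

lemma fMC_odd (a : ℕ) (h : 1 ≤ a) : fMC (2 * a + 1) = fMC a + fMC (a + 1) + 1 := by
  rw [fMC]
  have h1 : ¬ (2 * a + 1 ≤ 1) := by omega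
  have h2 : ¬ ((2 * a + 1) % 2 = 0) := by omega
  have h3 : (2 * a + 1) / 2 = a := by omega
  simp [h1, h2, h3]

lemma fMC_subadd (p q : ℕ) : fMC (p + q) ≤ fMC p + fMC q + Nat.dist p q := by
  have key : ∀ s p q : ℕ, p + q = s → fMC (p + q) ≤ fMC p + fMC q + Nat.dist p q := by
    intro s
    induction s using Nat.strong_induction_on with
    | _ s ih =>
      intro p q hpq
      rcases Nat.eq_zero_or_pos p with hp | hp
      · subst hp; simp [fMC_zero, Nat.dist]
      rcases Nat.eq_zero_or_pos q with hq | hq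
      · subst hq; simp [fMC_zero, Nat.dist]
      rcases Nat.even_or_odd p with ⟨a, ha⟩ | ⟨a, ha⟩ <;>
        rcases Nat.even_or_odd q with ⟨b, hb⟩ | ⟨b, hb⟩
      · -- p = 2a, q = 2b, a b ≥ 1
        have ea : p = 2 * a := by omega
        have eb : q = 2 * b := by omega
        have epq : p + q = 2 * (a + b) := by omega
        have h1 := ih (a + b) (by omega) a b rfl
        rw [epq, fMC_even, ea, eb, fMC_even, fMC_even]
        simp only [Nat.dist] at h1 ⊢
        omega
      · -- p = 2a, q = 2b+1, a ≥ 1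
        have ea : p = 2 * a := by omega
        have eb : q = 2 * b + 1 := by omega
        rcases Nat.eq_zero_or_pos b with hb0 | hb0
        · -- q = 1
          subst hb0
          have epq : p + q = 2 * a + 1 := by omega
          have ha1 : 1 ≤ a := by omega
          have h1 := ih (a + 1) (by omega) a 1 rfl
          rw [epq, fMC_odd a ha1, ea, fMC_even, eb]
          simp only [fMC_one, Nat.dist] at h1 ⊢
          omega
        · have epq : p + q = 2 * (a + b) + 1 := by omega
          have h1 := ih (a + b) (by omega) a b rfl
          have h2 := ih (a + b + 1) (by omega) a (b + 1) (by omega)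
          rw [show a + (b + 1) = a + b + 1 from by omega] at h2
          rw [epq, fMC_odd (a + b) (by omega), ea, fMC_even, eb,
            fMC_odd b hb0]
          simp only [Nat.dist] at h1 h2 ⊢
          omega
      · -- p = 2a+1, q = 2b, b ≥ 1
        have ea : p = 2 * a + 1 := by omega
        have eb : q = 2 * b := by omega
        rcases Nat.eq_zero_or_pos a with ha0 | ha0
        · -- p = 1
          subst ha0
          have epq : p + q = 2 * b + 1 := by omega
          have hb1 : 1 ≤ b := by omega
          have h1 := ih (b + 1) (by omega) b 1 rfl
          rw [epq, fMC_odd b hb1, ea, eb, fMC_even]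
          simp only [fMC_one, Nat.dist] at h1 ⊢
          omega
        · have epq : p + q = 2 * (a + b) + 1 := by omega
          have h1 := ih (a + b) (by omega) a b rfl
          have h2 := ih (a + b + 1) (by omega) (a + 1) b (by omega)
          rw [show a + 1 + b = a + b + 1 from by omega] at h2
          rw [epq, fMC_odd (a + b) (by omega), ea, fMC_odd a ha0, eb, fMC_even]
          simp only [Nat.dist] at h1 h2 ⊢
          omega
      · -- p = 2a+1, q = 2b+1
        have ea : p = 2 * a + 1 := by omega
        have eb : q = 2 * b + 1 := by omega
        rcases Nat.eq_zero_or_pos a with ha0 | ha0 <;>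
          rcases Nat.eq_zero_or_pos b with hb0 | hb0
        · -- p = q = 1
          subst ha0; subst hb0
          have epq : p + q = 2 * 1 := by omega
          rw [epq, fMC_even, ea, eb]
          simp [fMC_one, Nat.dist]
        · -- p = 1, b ≥ 1
          subst ha0
          have epq : p + q = 2 * (b + 1) := by omega
          have h1 := ih (b + 1) (by omega) b 1 rfl
          rw [epq, fMC_even, ea, eb, fMC_odd b hb0]
          simp only [fMC_one, Nat.dist] at h1 ⊢
          omega
        · -- q = 1, a ≥ 1
          subst hb0
          have epq : p + q = 2 * (a + 1) := by omega
          have h1 := ih (a + 1) (by omega) a 1 rfl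
          rw [epq, fMC_even, ea, fMC_odd a ha0, eb]
          simp only [fMC_one, Nat.dist] at h1 ⊢
          omega
        · have epq : p + q = 2 * (a + b + 1) := by omega
          have h1 := ih (a + b + 1) (by omega) (a + 1) b (by omega)
          have h2 := ih (a + b + 1) (by omega) a (b + 1) (by omega)
          rw [show a + 1 + b = a + b + 1 from by omega] at h1
          rw [show a + (b + 1) = a + b + 1 from by omega] at h2
          rw [epq, fMC_even, ea, fMC_odd a ha0, eb, fMC_odd b hb0]
          simp only [Nat.dist] at h1 h2 ⊢
          omega
  exact key (p + q) p q rfl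

lemma FBT.leaves_pos (T : FBT) : 1 ≤ T.leaves := by
  induction T with
  | leaf => simp [FBT.leaves]
  | node a b iha ihb => simp [FBT.leaves]; omega

lemma fMC_le_colless (T : FBT) : fMC T.leaves ≤ T.colless := by
  induction T with
  | leaf => simp [FBT.leaves, FBT.colless, fMC_one]
  | node a b iha ihb =>
    simp only [FBT.leaves, FBT.colless]
    have := fMC_subadd a.leaves b.leaves
    omega

lemma exists_tree (n : ℕ) (hn : 1 ≤ n) :
    ∃ T : FBT, T.leaves = n ∧ T.colless = fMC n := by
  induction n using Nat.strong_induction_on with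
  | _ n ih =>
    rcases eq_or_lt_of_le hn with h1 | h1
    · exact ⟨FBT.leaf, by simp [FBT.leaves, ← h1], by simp [FBT.colless, ← h1, fMC_one]⟩
    · obtain ⟨T1, hl1, hc1⟩ := ih (n / 2) (by omega) (by omega)
      obtain ⟨T2, hl2, hc2⟩ := ih (n - n / 2) (by omega) (by omega)
      refine ⟨FBT.node T1 T2, by simp [FBT.leaves, hl1, hl2]; omega, ?_⟩
      simp only [FBT.colless, hc1, hc2, hl1, hl2]
      rcases Nat.even_or_odd n with ⟨k, hk⟩ | ⟨k, hk⟩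
      · have e1 : n / 2 = k := by omega
        have e2 : n - n / 2 = k := by omega
        have e3 : n = 2 * k := by omega
        rw [e2, e1, e3, fMC_even]
        simp [Nat.dist]
        omega
      · have hk1 : 1 ≤ k := by omega
        have e1 : n / 2 = k := by omega
        have e2 : n - n / 2 = k + 1 := by omega
        rw [e2, e1, hk, fMC_odd k hk1]
        simp [Nat.dist]

lemma minColless_eq (n : ℕ) (hn : 1 ≤ n) : minColless n = fMC n := by
  obtain ⟨T, hl, hc⟩ := exists_tree n hn
  apply le_antisymm
  · exact Nat.sInf_le ⟨T, hl, hc⟩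
  · refine le_csInf ⟨fMC n, T, hl, hc⟩ ?_
    rintro m ⟨T', hl', hc'⟩
    have := fMC_le_colless T'
    rw [hl', hc'] at this
    exact this

theorem minColless_recursion :
    minColless 1 = 0 ∧ minColless 2 = 0 ∧
      ∀ n : ℕ, 1 ≤ n →
        minColless (2 * n) = 2 * minColless n ∧
        minColless (2 * n + 1) = minColless (n + 1) + minColless n + 1 := by
  refine ⟨?_, ?_, ?_⟩
  · rw [minColless_eq 1 le_rfl, fMC_one]
  · rw [minColless_eq 2 (by omega)]
    have : (2 : ℕ) = 2 * 1 := rfl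
    rw [this, fMC_even, fMC_one]
  · intro n hn
    constructor
    · rw [minColless_eq (2 * n) (by omega), minColless_eq n hn, fMC_even]
    · rw [minColless_eq (2 * n + 1) (by omega), minColless_eq (n + 1) (by omega),
        minColless_eq n hn, fMC_odd n hn]
      omega
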